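/- arXiv:2008.08541 — 5 statements merged into one kernel-verified Lean document; each statement's English description precedes it below -/
import Mathlib

section
/- For every finite simple graph G, the all-ones configuration is solvable: there exists a pattern p ∈ GF(2)^n with N(G)p = 1 (the all-ones vector). -/
open scoped Classical

/-- Closed adjacency matrix of a simple graph over GF(2): entry (i,j) is 1 iff i = j or i ~ j. -/
noncomputable def closedAdj {V : Type*} [Fintype V] (G : SimpleGraph V) :
    Matrix V V (ZMod 2) :=
  Matrix.of fun i j => if i = j ∨ G.Adj i j then 1 else 0

/-- Nullity ν(G): dimension over GF(2) of the kernel of the closed adjacency matrix. -/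
noncomputable def nu {V : Type*} [Fintype V] (G : SimpleGraph V) : ℕ :=
  Module.finrank (ZMod 2) (LinearMap.ker (closedAdj G).mulVecLin)

lemma zmod2_mul_self (x : ZMod 2) : x * x = x := by revert x; decide

lemma zmod2_add_self (x : ZMod 2) : x + x = 0 := by revert x; decide

theorem all_ones_solvable {V : Type*} [Fintype V] (G : SimpleGraph V) :
    ∃ p : V → ZMod 2, (closedAdj G).mulVec p = 1 := by
  set M := closedAdj G with hM
  have hdiag : ∀ i, M i i = 1 := by intro i; simp [hM, closedAdj]
  have hsym : ∀ i j, M i j = M j i := by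
    intro i j
    simp only [hM, closedAdj, Matrix.of_apply]
    rw [G.adj_comm]
    congr 1
    simp [eq_comm]
  by_contra h
  push_neg at h
  have h1 : (1 : V → ZMod 2) ∉ LinearMap.range M.mulVecLin := by
    rintro ⟨p, hp⟩; exact h p hp
  obtain ⟨f, hf1, hf2⟩ :=
    (LinearMap.range M.mulVecLin).exists_dual_map_eq_bot_of_notMem h1 inferInstance
  set c : V → ZMod 2 := fun i => f (fun j => if i = j then 1 else 0) with hc
  have hfc : ∀ v : V → ZMod 2, f v = dotProduct c v := by
    intro v
    conv_lhs => rw [pi_eq_sum_univ v]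
    rw [map_sum]
    simp only [map_smul]
    simp [dotProduct, hc, smul_eq_mul, mul_comm]
  have hker : ∀ v ∈ LinearMap.range M.mulVecLin, f v = 0 := by
    intro v hv
    have : f v ∈ (LinearMap.range M.mulVecLin).map f := Submodule.mem_map_of_mem hv
    rw [hf2] at this
    exact (Submodule.mem_bot (ZMod 2)).mp this
  -- Matrix.dotProduct c M *ᵥ c = 0
  have hzero : dotProduct c (M.mulVec c) = 0 := by
    rw [← hfc]
    exact hker _ ⟨c, rfl⟩
  -- quadratic form computation
  have key : dotProduct c (M.mulVec c) = ∑ i, c i := by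
    have expand : dotProduct c (M.mulVec c) = ∑ i, ∑ j, c i * M i j * c j := by
      simp [dotProduct, Matrix.mulVec, Finset.mul_sum, mul_assoc]
    rw [expand]
    have hrow : ∀ i, ∑ j, c i * M i j * c j
        = c i + ∑ j ∈ Finset.univ.erase i, c i * M i j * c j := by
      intro i
      rw [← Finset.add_sum_erase _ _ (Finset.mem_univ i)]
      congr 1
      rw [hdiag, mul_one, zmod2_mul_self]
    simp only [hrow]
    rw [Finset.sum_add_distrib]
    have hoff : ∑ i, ∑ j ∈ Finset.univ.erase i, c i * M i j * c j = 0 := by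
      rw [Finset.sum_sigma']
      refine Finset.sum_involution (fun p _ => ⟨p.2, p.1⟩) ?_ ?_ ?_ ?_
      · intro a ha
        have : c a.2 * M a.2 a.1 * c a.1 = c a.1 * M a.1 a.2 * c a.2 := by
          rw [hsym a.2 a.1]; ring
        rw [this, zmod2_add_self]
      · intro a ha hne
        simp only [Finset.mem_sigma, Finset.mem_univ, Finset.mem_erase, true_and,
          and_true] at ha
        intro heq
        exact ha (congrArg Sigma.fst heq)
      · intro a ha
        simp only [Finset.mem_sigma, Finset.mem_univ, Finset.mem_erase, true_and,
          and_true] at ha ⊢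
        exact fun h => ha h.symm
      · intro a ha; rfl
    rw [hoff, add_zero]
  have hone : f 1 = ∑ i, c i := by
    rw [hfc]; simp [dotProduct]
  rw [key] at hzero
  rw [hone, hzero] at hf1
  exact hf1 rfl
end

section
/- Let G be a finite simple graph and u a vertex such that the configuration which is 'on' at every vertex except u (i.e., 1 + c_u, where c_u is the indicator of u) is solvable. Then every pattern p with Np = 1 + c_u satisfies p(u) = 0. -/
open scoped Classical

theorem not_activated_of_solves_all_ones_except {V : Type*} [Fintype V]
    (G : SimpleGraph V) (u : V)
    (hsolv : ∃ p : V → ZMod 2, (closedAdj G).mulVec p = 1 + Pi.single u 1) :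
    ∀ p : V → ZMod 2, (closedAdj G).mulVec p = 1 + Pi.single u 1 → p u = 0 := by
  intro p hp
  set N := closedAdj G with hN
  have hsymm : ∀ i j, N i j = N j i := by
    intro i j
    simp only [hN, closedAdj, Matrix.of_apply]
    have : (i = j ∨ G.Adj i j) ↔ (j = i ∨ G.Adj j i) := by
      constructor <;> rintro (h | h)
      · exact Or.inl h.symm
      · exact Or.inr (G.adj_symm h)
      · exact Or.inl h.symm
      · exact Or.inr (G.adj_symm h)
    simp [this]
  have hdiag : ∀ i, N i i = 1 := by intro i; simp [hN, closedAdj]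
  have hsq : ∀ x : ZMod 2, x * x = x := by decide
  -- quadratic form identity: pᵀ N p = Σ p i
  have hquad : ∑ i, p i * N.mulVec p i = ∑ i, p i := by
    simp only [Matrix.mulVec, dotProduct, Finset.mul_sum]
    rw [← Finset.sum_product']
    rw [← Finset.sum_filter_add_sum_filter_not (Finset.univ ×ˢ Finset.univ)
      (fun q => q.1 = q.2)]
    have h1 : ∑ q ∈ (Finset.univ ×ˢ Finset.univ).filter (fun q : V × V => q.1 = q.2),
        p q.1 * (N q.1 q.2 * p q.2) = ∑ i, p i := by
      rw [Finset.sum_filter, Finset.sum_product]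
      have : ∀ i : V, ∑ j, (if i = j then p i * (N i j * p j) else 0) = p i := by
        intro i
        rw [Finset.sum_ite_eq Finset.univ i (fun j => p i * (N i j * p j))]
        simp [hdiag i, hsq]
      simp [this]
    have h2 : ∑ q ∈ (Finset.univ ×ˢ Finset.univ).filter (fun q : V × V => ¬ q.1 = q.2),
        p q.1 * (N q.1 q.2 * p q.2) = 0 := by
      refine Finset.sum_involution (fun q _ => q.swap) ?_ ?_ ?_ ?_
      · intro q hq
        have : N q.2 q.1 = N q.1 q.2 := hsymm q.2 q.1
        simp only [Prod.fst_swap, Prod.snd_swap, this]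
        ring_nf
        simp [show (2 : ZMod 2) = 0 from rfl]
      · intro q hq _
        simp only [Finset.mem_filter] at hq
        intro hcontra
        apply hq.2
        have h' := congrArg Prod.fst hcontra
        simpa using h'.symm
      · intro q hq
        simp only [Finset.mem_filter, Finset.mem_product, Finset.mem_univ] at hq ⊢
        exact ⟨⟨trivial, trivial⟩, fun h => hq.2 h.symm⟩
      · intro q hq; simp
    rw [h1, h2, add_zero]
  have hrhs : ∑ i, p i * ((1 + Pi.single u 1 : V → ZMod 2) i) = (∑ i, p i) + p u := by
    simp only [Pi.add_apply, Pi.one_apply, mul_add, mul_one, Finset.sum_add_distrib]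
    congr 1
    rw [Finset.sum_eq_single u]
    · simp
    · intro b _ hb; simp [Pi.single_eq_of_ne hb]
    · intro h; exact absurd (Finset.mem_univ u) h
  rw [hp] at hquad
  have h0 : (∑ i, p i) + p u = ∑ i, p i := by rw [← hrhs]; exact hquad
  have := add_left_cancel (a := ∑ i, p i) (b := p u) (c := 0) (by rw [add_zero]; exact h0)
  exact this
end

section
/- Let G be a finite simple graph and v a fixed vertex. Then every pattern s solving the all-ones configuration satisfies s(v) = 1 if and only if every pattern p solving c_v satisfies p(v) = 1. (Equivalently: v is always-activated for the all-ones configuration iff v is always-activated for c_v.) -/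
open scoped Classical

open Matrix

section aux
variable {V : Type*} [Fintype V]

lemma closedAdj_symm (G : SimpleGraph V) : (closedAdj G)ᵀ = closedAdj G := by
  ext i j
  simp only [Matrix.transpose_apply, closedAdj, Matrix.of_apply]
  congr 1
  rw [eq_iff_iff]
  constructor
  · rintro (h | h)
    · exact Or.inl h.symm
    · exact Or.inr (G.adj_symm h)
  · rintro (h | h)
    · exact Or.inl h.symm
    · exact Or.inr (G.adj_symm h)

lemma closedAdj_diag (G : SimpleGraph V) (i : V) : closedAdj G i i = 1 := by
  simp [closedAdj]

/-- quadratic identity in char 2 -/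
lemma quad (M : Matrix V V (ZMod 2)) (hsym : Mᵀ = M) (hdiag : ∀ i, M i i = 1)
    (x : V → ZMod 2) : x ⬝ᵥ M.mulVec x = ∑ i, x i := by
  classical
  have hexp : x ⬝ᵥ M.mulVec x = ∑ p ∈ Finset.univ ×ˢ Finset.univ,
      x p.1 * M p.1 p.2 * x p.2 := by
    rw [Finset.sum_product]
    simp [dotProduct, Matrix.mulVec, Finset.mul_sum, mul_assoc]
  rw [hexp]
  rw [← Finset.sum_filter_add_sum_filter_not _ (fun p => p.1 = p.2)]
  have h1 : ∑ p ∈ (Finset.univ ×ˢ Finset.univ).filter (fun p : V × V => p.1 = p.2),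
      x p.1 * M p.1 p.2 * x p.2 = ∑ i, x i := by
    rw [Finset.sum_filter]
    rw [Finset.sum_product]
    simp only [Finset.sum_ite_eq, Finset.mem_univ, if_true]
    refine Finset.sum_congr rfl fun i _ => ?_
    rw [hdiag i, mul_one]
    have h2 : ∀ a : ZMod 2, a * a = a := by decide
    exact h2 _
  have h2 : ∑ p ∈ (Finset.univ ×ˢ Finset.univ).filter (fun p : V × V => ¬ p.1 = p.2),
      x p.1 * M p.1 p.2 * x p.2 = 0 := by
    apply Finset.sum_involution (g := fun a _ => Prod.swap a)
    · intro a ha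
      have hM : M a.2 a.1 = M a.1 a.2 := by conv_rhs => rw [← hsym]; rw [Matrix.transpose_apply]
      simp only [Prod.fst_swap, Prod.snd_swap]
      have h3 : x a.2 * M a.2 a.1 * x a.1 = x a.1 * M a.1 a.2 * x a.2 := by rw [hM]; ring
      rw [h3, CharTwo.add_self_eq_zero]
    · intro a ha _
      simp only [Finset.mem_filter, Finset.mem_product] at ha
      intro h
      exact ha.2 (congrArg Prod.fst h).symm
    · intro a ha
      simp only [Finset.mem_filter, Finset.mem_product, Finset.mem_univ, true_and,
        Prod.fst_swap, Prod.snd_swap] at *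
      exact fun h => ha h.symm
    · intro a ha
      simp
  rw [h1, h2, add_zero]

end aux

section aux2
variable {V : Type*} [Fintype V]

lemma solvable (M : Matrix V V (ZMod 2)) (hsym : Mᵀ = M) (w : V → ZMod 2)
    (hw : ∀ k, M.mulVec k = 0 → w ⬝ᵥ k = 0) : ∃ p, M.mulVec p = w := by
  classical
  by_contra hcon
  push_neg at hcon
  have hw' : w ∉ LinearMap.range M.mulVecLin := by
    rintro ⟨p, hp⟩
    exact hcon p hp
  obtain ⟨f, hf0, hfmap⟩ :=
    Submodule.exists_dual_map_eq_bot_of_notMem hw' inferInstance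
  set k : V → ZMod 2 := fun i => f (Pi.single i (1 : ZMod 2)) with hk
  have hfx : ∀ x : V → ZMod 2, f x = k ⬝ᵥ x := by
    intro x
    conv_lhs => rw [← Finset.univ_sum_single x]
    rw [map_sum]
    unfold dotProduct
    refine Finset.sum_congr rfl fun i _ => ?_
    have h1 : Pi.single i (x i) = x i • (Pi.single i 1 : V → ZMod 2) := by
      rw [← Pi.single_smul, smul_eq_mul, mul_one]
    rw [h1, _root_.map_smul, smul_eq_mul]
    exact mul_comm _ _
  have hrange : ∀ x, f (M.mulVec x) = 0 := by
    intro x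
    have hmem : f (M.mulVec x) ∈ Submodule.map f (LinearMap.range M.mulVecLin) :=
      ⟨M.mulVec x, ⟨x, rfl⟩, rfl⟩
    rw [hfmap] at hmem
    exact (Submodule.mem_bot (ZMod 2)).mp hmem
  have hker : M.mulVec k = 0 := by
    funext j
    have h0 := hrange (Pi.single j 1)
    rw [hfx] at h0
    rw [Matrix.dotProduct_mulVec] at h0
    have hvm : Matrix.vecMul k M = M.mulVec k := by
      rw [← hsym, Matrix.vecMul_transpose, hsym]
    rw [hvm, dotProduct_single, mul_one] at h0
    simpa using h0
  have := hw k hker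
  rw [dotProduct_comm, ← hfx] at this
  exact hf0 this

end aux2


theorem always_activated_iff {V : Type*} [Fintype V] (G : SimpleGraph V) (v : V)
    (hv : ∀ l : V → ZMod 2, (closedAdj G).mulVec l = 0 → l v = 0) :
    (∀ s : V → ZMod 2, (closedAdj G).mulVec s = 1 → s v = 1) ↔
      (∀ p : V → ZMod 2, (closedAdj G).mulVec p = Pi.single v 1 → p v = 1) := by
  classical
  set M := closedAdj G with hM
  have hsym : Mᵀ = M := closedAdj_symm G
  have hdiag := closedAdj_diag G
  -- c_v is solvable
  obtain ⟨p₀, hp₀⟩ : ∃ p, M.mulVec p = Pi.single v 1 := by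
    apply solvable M hsym
    intro k hk
    rw [single_dotProduct, one_mul]
    exact hv k hk
  -- all-ones is solvable (Sutner)
  obtain ⟨s₀, hs₀⟩ : ∃ s, M.mulVec s = 1 := by
    apply solvable M hsym
    intro k hk
    have h1 := quad M hsym hdiag k
    rw [hk, dotProduct_zero] at h1
    have : (1 : V → ZMod 2) ⬝ᵥ k = ∑ i, k i := by
      simp [dotProduct]
    rw [this, ← h1]
  -- key identity 1: any solution p of c_v has p v = ∑ p
  have key1 : ∀ p : V → ZMod 2, M.mulVec p = Pi.single v 1 → p v = ∑ i, p i := by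
    intro p hp
    have h1 := quad M hsym hdiag p
    rw [hp, dotProduct_single, mul_one] at h1
    exact h1
  -- key identity 2: any solution s of all-ones has s v = ∑ p for any solution p of c_v
  have key2 : ∀ s p : V → ZMod 2, M.mulVec s = 1 → M.mulVec p = Pi.single v 1 →
      s v = ∑ i, p i := by
    intro s p hs hp
    have h1 : p ⬝ᵥ M.mulVec s = ∑ i, p i := by
      rw [hs]
      simp [dotProduct]
    rw [Matrix.dotProduct_mulVec] at h1
    have hvm : Matrix.vecMul p M = M.mulVec p := by
      rw [← hsym, Matrix.vecMul_transpose, hsym]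
    rw [hvm, hp, single_dotProduct, one_mul] at h1
    exact h1
  constructor
  · intro h p hp
    have hs := h s₀ hs₀
    rw [key2 s₀ p hs₀ hp] at hs
    rw [key1 p hp]
    exact hs
  · intro h s hs
    have hp := h p₀ hp₀
    rw [key1 p₀ hp₀] at hp
    rw [key2 s p₀ hs hp₀]
    exact hp
end

section
/- Let u be a half-activated vertex of a finite simple graph G. Then there exists a half-activated vertex w adjacent to u. (In particular, if some null pattern ℓ satisfies ℓ(u) = 1, then ℓ activates an odd number of neighbors of u.) -/
open scoped Classical

theorem half_activated_has_half_activated_neighbor {V : Type*} [Fintype V]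
    (G : SimpleGraph V) (u : V)
    (hu : ∃ l : V → ZMod 2, (closedAdj G).mulVec l = 0 ∧ l u = 1) :
    ∃ w : V, G.Adj u w ∧ ∃ l : V → ZMod 2, (closedAdj G).mulVec l = 0 ∧ l w = 1 := by
  obtain ⟨l, hl, hlu⟩ := hu
  by_contra hcon
  push_neg at hcon
  have two : ∀ x : ZMod 2, x = 0 ∨ x = 1 := by decide
  have key : ∀ w, G.Adj u w → l w = 0 := by
    intro w hw
    rcases two (l w) with h0 | h1
    · exact h0
    · exact absurd h1 (hcon w hw l hl)
  have h0 : ∑ j, closedAdj G u j * l j = 0 := by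
    have := congrFun hl u
    simpa [Matrix.mulVec, dotProduct] using this
  have h1 : ∑ j, closedAdj G u j * l j = l u := by
    rw [Finset.sum_eq_single u]
    · simp [closedAdj]
    · intro j _ hj
      by_cases hadj : G.Adj u j
      · simp [key j hadj]
      · simp [closedAdj, hadj, Ne.symm hj]
    · simp
  rw [h1, hlu] at h0
  exact one_ne_zero h0
end

section
/- Let G_1 and G_2 be disjoint finite simple graphs with u ∈ V(G_1), w ∈ V(G_2), and let H = G_1 u w G_2 be the graph obtained by joining u and w with an edge. If u is always-activated in G_1 (every solution of the all-ones configuration on G_1 activates u) and w is always-activated in G_2, then ν(H) = ν(G_1) + ν(G_2) + 1. -/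
open scoped Classical

open Matrix

namespace NuJoinAux


variable {n : Type*} [Fintype n]

lemma zmod2_mul_self' : ∀ x : ZMod 2, x * x = x := by decide

lemma zmod2_mul_self (x : ZMod 2) : x * x = x := zmod2_mul_self' x

lemma zmod2_add_eq_zero' : ∀ a b : ZMod 2, a + b = 0 → a = b := by decide

lemma zmod2_add_eq_zero {a b : ZMod 2} (h : a + b = 0) : a = b := zmod2_add_eq_zero' a b h

lemma zmod2_ne_zero' : ∀ a : ZMod 2, a ≠ 0 → a = 1 := by decide

lemma zmod2_ne_zero {a : ZMod 2} (h : a ≠ 0) : a = 1 := zmod2_ne_zero' a h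

lemma quad_eq_diag (M : Matrix n n (ZMod 2)) (hM : M.IsSymm) (k : n → ZMod 2) :
    k ⬝ᵥ (M *ᵥ k) = M.diag ⬝ᵥ k := by
  classical
  have expand : k ⬝ᵥ (M *ᵥ k) = ∑ p : n × n, k p.1 * M p.1 p.2 * k p.2 := by
    rw [Fintype.sum_prod_type]
    simp only [dotProduct, Matrix.mulVec, Finset.mul_sum]
    exact Finset.sum_congr rfl fun i _ => Finset.sum_congr rfl fun j _ => by ring
  rw [expand, ← Finset.sum_filter_add_sum_filter_not Finset.univ (fun p : n × n => p.1 = p.2)]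
  have hoff : ∑ p ∈ Finset.univ.filter (fun p : n × n => ¬ p.1 = p.2),
      k p.1 * M p.1 p.2 * k p.2 = 0 := by
    refine Finset.sum_involution (fun p _ => p.swap) ?_ ?_ (fun p hp => ?_) (fun p hp => ?_)
    · intro p hp
      have hs : M p.2 p.1 = M p.1 p.2 := hM.apply p.1 p.2
      have he : k p.swap.1 * M p.swap.1 p.swap.2 * k p.swap.2
          = k p.1 * M p.1 p.2 * k p.2 := by
        simp only [Prod.fst_swap, Prod.snd_swap, hs]; ring
      rw [he]; exact CharTwo.add_self_eq_zero _
    · intro p hp _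
      simp only [Finset.mem_filter, Finset.mem_univ, true_and] at hp
      intro hc
      apply hp
      have h5 := congrArg Prod.fst hc
      simpa using h5.symm
    · simp only [Finset.mem_filter, Finset.mem_univ, true_and] at hp ⊢
      simp only [Prod.fst_swap, Prod.snd_swap]
      exact fun hc => hp hc.symm
    · exact Prod.swap_swap p
  rw [hoff, add_zero]
  have hdiag : ∑ p ∈ Finset.univ.filter (fun p : n × n => p.1 = p.2),
      k p.1 * M p.1 p.2 * k p.2 = ∑ i, k i * M i i * k i := by
    refine Finset.sum_nbij' (fun p => p.1) (fun i => (i, i)) ?_ ?_ ?_ ?_ ?_ <;>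
      simp +contextual [Finset.mem_filter, Prod.ext_iff, eq_comm]
  rw [hdiag, dotProduct]
  exact Finset.sum_congr rfl fun i _ => by
    rw [Matrix.diag_apply, mul_comm (k i) (M i i), mul_assoc, zmod2_mul_self]

lemma mem_range_of_ortho (M : Matrix n n (ZMod 2)) (hM : M.IsSymm) (v : n → ZMod 2)
    (h : ∀ k, M *ᵥ k = 0 → v ⬝ᵥ k = 0) : ∃ x, M *ᵥ x = v := by
  classical
  set K := LinearMap.ker M.mulVecLin with hK
  let e : (n → ZMod 2) →ₗ[ZMod 2] Module.Dual (ZMod 2) (n → ZMod 2) :=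
    { toFun := fun x =>
        { toFun := fun y => x ⬝ᵥ y
          map_add' := fun y z => dotProduct_add x y z
          map_smul' := fun c y => by simp [dotProduct_smul] }
      map_add' := fun x x' => by ext y; simp [add_dotProduct]
      map_smul' := fun c x => by ext y; simp [smul_dotProduct] }
  let L : (n → ZMod 2) →ₗ[ZMod 2] Module.Dual (ZMod 2) K := K.subtype.dualMap ∘ₗ e
  have hLapply : ∀ (x : n → ZMod 2) (k : K), L x k = x ⬝ᵥ (k : n → ZMod 2) := fun _ _ => rfl
  have hsurj : Function.Surjective L := by
    intro φ
    obtain ⟨g, hg⟩ := LinearMap.exists_extend φ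
    refine ⟨fun i => g (Pi.single i 1), ?_⟩
    ext k
    rw [hLapply]
    have := LinearMap.pi_apply_eq_sum_univ g (k : n → ZMod 2)
    rw [← hg]
    simp only [LinearMap.comp_apply, Submodule.subtype_apply]
    rw [this, dotProduct]
    refine Finset.sum_congr rfl fun i _ => ?_
    rw [smul_eq_mul, mul_comm]
    congr 1
    congr 1
    funext j
    simp [Pi.single_apply, eq_comm]
  have h1 : Module.finrank (ZMod 2) (LinearMap.range M.mulVecLin)
      + Module.finrank (ZMod 2) K = Module.finrank (ZMod 2) (n → ZMod 2) :=
    LinearMap.finrank_range_add_finrank_ker M.mulVecLin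
  have h2 : Module.finrank (ZMod 2) (LinearMap.range L)
      + Module.finrank (ZMod 2) (LinearMap.ker L) = Module.finrank (ZMod 2) (n → ZMod 2) :=
    LinearMap.finrank_range_add_finrank_ker L
  have h3 : LinearMap.range L = ⊤ := LinearMap.range_eq_top.mpr hsurj
  have h4 : Module.finrank (ZMod 2) (LinearMap.range L) = Module.finrank (ZMod 2) K := by
    rw [h3]
    rw [finrank_top]
    exact Subspace.dual_finrank_eq
  have hle : LinearMap.range M.mulVecLin ≤ LinearMap.ker L := by
    rintro _ ⟨x, rfl⟩
    rw [LinearMap.mem_ker]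
    ext ⟨k, hk⟩
    rw [hLapply]
    simp only [LinearMap.zero_apply]
    have hk0 : M *ᵥ k = 0 := hk
    rw [Matrix.mulVecLin_apply, dotProduct_comm, Matrix.dotProduct_mulVec,
      ← Matrix.mulVec_transpose, hM.eq, hk0]
    exact zero_dotProduct x
  have heq : LinearMap.range M.mulVecLin = LinearMap.ker L :=
    Submodule.eq_of_le_of_finrank_le hle (by omega)
  have hv : v ∈ LinearMap.ker L := by
    rw [LinearMap.mem_ker]
    ext ⟨k, hk⟩
    rw [hLapply]
    exact h k hk
  rw [← heq] at hv
  obtain ⟨x, hx⟩ := hv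
  exact ⟨x, by rw [← Matrix.mulVecLin_apply, hx]⟩





lemma closedAdj_isSymm {V : Type*} [Fintype V] (G : SimpleGraph V) :
    (closedAdj G).IsSymm := by
  ext i j
  simp only [Matrix.transpose_apply, closedAdj, Matrix.of_apply]
  exact if_congr (or_congr eq_comm (G.adj_comm j i)) rfl rfl

lemma closedAdj_diag {V : Type*} [Fintype V] (G : SimpleGraph V) :
    (closedAdj G).diag = 1 := by
  funext i
  simp [Matrix.diag_apply, closedAdj]

/-- always-activated vertex: kernel vanishing + special solution. -/
lemma exists_special {V : Type*} [Fintype V] (G : SimpleGraph V) (u : V)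
    (hu : ∀ p : V → ZMod 2, (closedAdj G).mulVec p = 1 → p u = 1) :
    (∀ k, closedAdj G *ᵥ k = 0 → k u = 0) ∧
    ∃ a, closedAdj G *ᵥ a = Pi.single u 1 ∧ a u = 1 := by
  have hsymm := closedAdj_isSymm G
  have hdiag := closedAdj_diag G
  obtain ⟨p₁, hp₁⟩ : ∃ p, closedAdj G *ᵥ p = 1 := by
    refine mem_range_of_ortho _ hsymm 1 (fun k hk => ?_)
    have hq := quad_eq_diag _ hsymm k
    rw [hk, dotProduct_zero, hdiag] at hq
    exact hq.symm
  have hp₁u : p₁ u = 1 := hu p₁ hp₁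
  have hker : ∀ k, closedAdj G *ᵥ k = 0 → k u = 0 := by
    intro k hk
    have hsum : closedAdj G *ᵥ (p₁ + k) = 1 := by
      rw [Matrix.mulVec_add, hp₁, hk, add_zero]
    have h2 : p₁ u + k u = 1 := hu _ hsum
    rw [hp₁u] at h2
    exact (add_eq_left.mp h2)
  obtain ⟨a, ha⟩ : ∃ a, closedAdj G *ᵥ a = Pi.single u 1 := by
    refine mem_range_of_ortho _ hsymm _ (fun k hk => ?_)
    rw [single_dotProduct, one_mul, hker k hk]
  have hsum1 : (1 : V → ZMod 2) ⬝ᵥ a = 1 := by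
    calc (1 : V → ZMod 2) ⬝ᵥ a = (closedAdj G *ᵥ p₁) ⬝ᵥ a := by rw [hp₁]
    _ = p₁ ⬝ᵥ (closedAdj G *ᵥ a) := by
        rw [Matrix.dotProduct_mulVec, ← Matrix.mulVec_transpose, hsymm.eq]
    _ = p₁ u := by rw [ha, dotProduct_single, mul_one]
    _ = 1 := hp₁u
  have hau : a u = 1 := by
    have h1 : a ⬝ᵥ (closedAdj G *ᵥ a) = a u := by
      rw [ha, dotProduct_single, mul_one]
    have h2 : a ⬝ᵥ (closedAdj G *ᵥ a) = 1 := by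
      rw [quad_eq_diag _ hsymm, hdiag, hsum1]
    rw [h1] at h2
    exact h2
  exact ⟨hker, a, ha, hau⟩


end NuJoinAux

open NuJoinAux in
theorem nu_join_always_activated {V₁ V₂ : Type*} [Fintype V₁] [Fintype V₂]
    (G₁ : SimpleGraph V₁) (G₂ : SimpleGraph V₂) (u : V₁) (w : V₂)
    (H : SimpleGraph (V₁ ⊕ V₂))
    (hll : ∀ a b : V₁, H.Adj (Sum.inl a) (Sum.inl b) ↔ G₁.Adj a b)
    (hrr : ∀ a b : V₂, H.Adj (Sum.inr a) (Sum.inr b) ↔ G₂.Adj a b)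
    (hlr : ∀ (a : V₁) (b : V₂), H.Adj (Sum.inl a) (Sum.inr b) ↔ a = u ∧ b = w)
    (hu : ∀ p : V₁ → ZMod 2, (closedAdj G₁).mulVec p = 1 → p u = 1)
    (hw : ∀ p : V₂ → ZMod 2, (closedAdj G₂).mulVec p = 1 → p w = 1) :
    nu H = nu G₁ + nu G₂ + 1 := by
  classical
  obtain ⟨hker₁, a, ha, hau⟩ := exists_special G₁ u hu
  obtain ⟨hker₂, b, hb, hbw⟩ := exists_special G₂ w hw
  -- row computations for the closed adjacency matrix of H
  have hrow₁ : ∀ (x : V₁ ⊕ V₂ → ZMod 2) (i : V₁),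
      (closedAdj H *ᵥ x) (Sum.inl i)
        = (closedAdj G₁ *ᵥ (x ∘ Sum.inl)) i + (Pi.single u (x (Sum.inr w)) : V₁ → ZMod 2) i := by
    intro x i
    simp only [Matrix.mulVec, dotProduct, Fintype.sum_sum_type]
    congr 1
    · refine Finset.sum_congr rfl fun j _ => ?_
      simp only [closedAdj, Matrix.of_apply, Function.comp_apply]
      congr 1
      simp [hll]
    · have hent : ∀ j : V₂,
          (closedAdj H) (Sum.inl i) (Sum.inr j) = if i = u ∧ j = w then 1 else 0 := by
        intro j
        simp only [closedAdj, Matrix.of_apply]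
        congr 1
        simp [hlr]
      rw [Finset.sum_congr rfl (fun j _ => by rw [hent j])]
      by_cases hi : i = u
      · subst hi
        simp [Pi.single_apply, ite_mul]
      · simp [hi, Pi.single_apply]
  have hrow₂ : ∀ (x : V₁ ⊕ V₂ → ZMod 2) (i : V₂),
      (closedAdj H *ᵥ x) (Sum.inr i)
        = (Pi.single w (x (Sum.inl u)) : V₂ → ZMod 2) i + (closedAdj G₂ *ᵥ (x ∘ Sum.inr)) i := by
    intro x i
    simp only [Matrix.mulVec, dotProduct, Fintype.sum_sum_type]
    congr 1
    · have hent : ∀ j : V₁,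
          (closedAdj H) (Sum.inr i) (Sum.inl j) = if j = u ∧ i = w then 1 else 0 := by
        intro j
        simp only [closedAdj, Matrix.of_apply]
        congr 1
        simp only [eq_iff_iff]
        constructor
        · rintro (h | h)
          · exact absurd h (by simp)
          · exact (hlr j i).mp h.symm
        · intro h
          exact Or.inr ((hlr j i).mpr h).symm
      rw [Finset.sum_congr rfl (fun j _ => by rw [hent j])]
      by_cases hi : i = w
      · subst hi
        simp [Pi.single_apply, ite_mul]
      · simp [hi, Pi.single_apply]
    · refine Finset.sum_congr rfl fun j _ => ?_
      simp only [closedAdj, Matrix.of_apply, Function.comp_apply]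
      congr 1
      simp [hrr]
  -- kernel characterization
  have hmem : ∀ x : V₁ ⊕ V₂ → ZMod 2, x ∈ LinearMap.ker (closedAdj H).mulVecLin ↔
      closedAdj G₁ *ᵥ (x ∘ Sum.inl) = Pi.single u (x (Sum.inr w)) ∧
      closedAdj G₂ *ᵥ (x ∘ Sum.inr) = Pi.single w (x (Sum.inl u)) := by
    intro x
    rw [LinearMap.mem_ker, Matrix.mulVecLin_apply]
    constructor
    · intro h
      constructor
      · funext i
        have h0 := congrFun h (Sum.inl i)
        rw [hrow₁ x i] at h0
        exact zmod2_add_eq_zero h0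
      · funext i
        have h0 := congrFun h (Sum.inr i)
        rw [hrow₂ x i] at h0
        exact (zmod2_add_eq_zero h0).symm
    · rintro ⟨h1, h2⟩
      funext i
      cases i with
      | inl i =>
        rw [Pi.zero_apply, hrow₁ x i, congrFun h1 i]
        exact CharTwo.add_self_eq_zero _
      | inr i =>
        rw [Pi.zero_apply, hrow₂ x i, congrFun h2 i]
        exact CharTwo.add_self_eq_zero _
  set K₁ := LinearMap.ker (closedAdj G₁).mulVecLin with hK₁
  set K₂ := LinearMap.ker (closedAdj G₂).mulVecLin with hK₂
  -- the linear map
  let Ψ : (K₁ × K₂ × ZMod 2) →ₗ[ZMod 2] (V₁ ⊕ V₂ → ZMod 2) :=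
    { toFun := fun x =>
        Sum.elim ((x.1 : V₁ → ZMod 2) + x.2.2 • a) ((x.2.1 : V₂ → ZMod 2) + x.2.2 • b)
      map_add' := by
        rintro ⟨p₁, q₁, t₁⟩ ⟨p₂, q₂, t₂⟩
        funext i
        cases i <;>
          simp only [Sum.elim_inl, Sum.elim_inr, Prod.fst_add, Prod.snd_add,
            Submodule.coe_add, Pi.add_apply, Pi.smul_apply, smul_eq_mul, add_smul] <;> ring
      map_smul' := by
        rintro c ⟨p, q, t⟩
        funext i
        cases i <;>
          simp only [Sum.elim_inl, Sum.elim_inr, Prod.smul_fst, Prod.smul_snd,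
            SetLike.val_smul, RingHom.id_apply, Pi.add_apply, Pi.smul_apply,
            smul_eq_mul] <;> ring }
  have hΨ : ∀ x : K₁ × K₂ × ZMod 2,
      Ψ x = Sum.elim ((x.1 : V₁ → ZMod 2) + x.2.2 • a) ((x.2.1 : V₂ → ZMod 2) + x.2.2 • b) :=
    fun _ => rfl
  have hker₁' : ∀ k : K₁, (k : V₁ → ZMod 2) u = 0 := by
    rintro ⟨k, hk⟩
    exact hker₁ k (by rwa [LinearMap.mem_ker, Matrix.mulVecLin_apply] at hk)
  have hker₂' : ∀ k : K₂, (k : V₂ → ZMod 2) w = 0 := by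
    rintro ⟨k, hk⟩
    exact hker₂ k (by rwa [LinearMap.mem_ker, Matrix.mulVecLin_apply] at hk)
  have hinj : Function.Injective Ψ := by
    rw [injective_iff_map_eq_zero]
    rintro ⟨p, q, t⟩ h0
    rw [hΨ] at h0
    have ht : t = 0 := by
      have h1 := congrFun h0 (Sum.inl u)
      simp only [Sum.elim_inl, Pi.add_apply, Pi.smul_apply, smul_eq_mul, Pi.zero_apply] at h1
      rwa [hker₁' p, hau, mul_one, zero_add] at h1
    have hp : p = 0 := by
      ext i
      have h1 := congrFun h0 (Sum.inl i)
      simpa [ht] using h1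
    have hq : q = 0 := by
      ext i
      have h1 := congrFun h0 (Sum.inr i)
      simpa [ht] using h1
    simp [hp, hq, ht, Prod.ext_iff]
  have hrange : LinearMap.range Ψ = LinearMap.ker (closedAdj H).mulVecLin := by
    apply le_antisymm
    · rintro _ ⟨⟨p, q, t⟩, rfl⟩
      rw [hΨ, hmem]
      have hcl : (Sum.elim ((p : V₁ → ZMod 2) + t • a) ((q : V₂ → ZMod 2) + t • b))
          ∘ Sum.inl = (p : V₁ → ZMod 2) + t • a := rfl
      have hcr : (Sum.elim ((p : V₁ → ZMod 2) + t • a) ((q : V₂ → ZMod 2) + t • b))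
          ∘ Sum.inr = (q : V₂ → ZMod 2) + t • b := rfl
      have hp0 : closedAdj G₁ *ᵥ (p : V₁ → ZMod 2) = 0 := by
        have := p.2; rwa [LinearMap.mem_ker, Matrix.mulVecLin_apply] at this
      have hq0 : closedAdj G₂ *ᵥ (q : V₂ → ZMod 2) = 0 := by
        have := q.2; rwa [LinearMap.mem_ker, Matrix.mulVecLin_apply] at this
      constructor
      · rw [hcl, Matrix.mulVec_add, Matrix.mulVec_smul, hp0, ha, zero_add]
        simp only [Sum.elim_inr, Pi.add_apply, Pi.smul_apply, smul_eq_mul]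
        rw [hker₂' q, hbw, mul_one, zero_add]
        funext j
        simp [Pi.single_apply, smul_eq_mul, mul_ite]
      · rw [hcr, Matrix.mulVec_add, Matrix.mulVec_smul, hq0, hb, zero_add]
        simp only [Sum.elim_inl, Pi.add_apply, Pi.smul_apply, smul_eq_mul]
        rw [hker₁' p, hau, mul_one, zero_add]
        funext j
        simp [Pi.single_apply, smul_eq_mul, mul_ite]
    · intro x hx
      rw [hmem] at hx
      obtain ⟨h1, h2⟩ := hx
      set t := x (Sum.inl u) with htdef
      have hqw : x (Sum.inr w) = t := by
        by_cases hc : x (Sum.inr w) = 0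
        · rw [hc] at h1
          simp only [Pi.single_zero] at h1
          have h3 := hker₁ _ h1
          rw [hc, htdef]
          exact (h3).symm
        · have hc1 : x (Sum.inr w) = 1 := zmod2_ne_zero hc
          rw [hc1] at h1
          have h4 : closedAdj G₁ *ᵥ ((x ∘ Sum.inl) + a) = 0 := by
            rw [Matrix.mulVec_add, h1, ha]
            funext i
            exact CharTwo.add_self_eq_zero _
          have h5 := hker₁ _ h4
          simp only [Pi.add_apply, Function.comp_apply] at h5
          rw [hau] at h5
          have h6 : x (Sum.inl u) = 1 := zmod2_add_eq_zero h5
          rw [hc1, htdef, h6]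
      -- membership of the two components
      have hpmem : (x ∘ Sum.inl) + t • a ∈ K₁ := by
        rw [hK₁, LinearMap.mem_ker, Matrix.mulVecLin_apply, Matrix.mulVec_add,
          Matrix.mulVec_smul, h1, ha, hqw]
        funext i
        simp only [Pi.add_apply, Pi.smul_apply, Pi.single_apply, smul_eq_mul, mul_ite,
          mul_one, mul_zero, Pi.zero_apply]
        by_cases hi : i = u <;> simp [hi, CharTwo.add_self_eq_zero]
      have hqmem : (x ∘ Sum.inr) + t • b ∈ K₂ := by
        rw [hK₂, LinearMap.mem_ker, Matrix.mulVecLin_apply, Matrix.mulVec_add,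
          Matrix.mulVec_smul, h2, hb]
        funext i
        simp only [Pi.add_apply, Pi.smul_apply, Pi.single_apply, smul_eq_mul, mul_ite,
          mul_one, mul_zero, Pi.zero_apply]
        by_cases hi : i = w <;> simp [hi, CharTwo.add_self_eq_zero]
      refine ⟨⟨⟨_, hpmem⟩, ⟨_, hqmem⟩, t⟩, ?_⟩
      rw [hΨ]
      funext i
      cases i with
      | inl i =>
        simp [add_assoc, CharTwo.add_self_eq_zero]
      | inr i =>
        simp [add_assoc, CharTwo.add_self_eq_zero]
  have hfin : nu H = Module.finrank (ZMod 2) (K₁ × K₂ × ZMod 2) := by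
    rw [nu, ← hrange]
    exact (LinearEquiv.finrank_eq (LinearEquiv.ofInjective Ψ hinj)).symm
  rw [hfin, Module.finrank_prod, Module.finrank_prod, Module.finrank_self]
  simp only [nu]
  rw [hK₁, hK₂]
  omega
end
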